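/- Let G be a group, S an additive commutative semigroup, and θ : G → S a surjective function that is a morphism on an arbitrarily large subset of G. Let φ : G → ℝ be positive definite and radial with respect to θ, i.e., φ = φ̇ ∘ θ for some function φ̇ : S → ℝ. Then φ̇ is positive definite on the semigroup S (for all n, s₁,…,s_n ∈ S and c₁,…,c_n ∈ ℂ, ∑_{j,k} c_j \overline{c_k} φ̇(s_j + s_k) ≥ 0) and bounded, with φ̇(s) ≤ φ(e) for every s ∈ S. -/

import Mathlib

open ComplexOrder Finset

/-- A real-valued function on a group is positive definite. -/
def IsPositiveDefinite {G : Type*} [Group G] (φ : G → ℝ) : Prop :=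
  ∀ (n : ℕ) (x : Fin n → G) (c : Fin n → ℂ),
    0 ≤ ∑ j, ∑ k, c j * (starRingEnd ℂ) (c k) * (φ ((x j)⁻¹ * x k) : ℂ)

/-- `θ : G → S` is a morphism on an arbitrarily large subset of `G`. -/
def IsMorphismOnArbLargeSubset {G S : Type*} [Group G] [AddCommSemigroup S]
    (θ : G → S) : Prop :=
  ∀ (N M : ℕ) (s : Fin M → S),
    ∃ g : Fin N → Fin M → G,
      ∀ (n m : Fin N) (j k : Fin M), n ≠ m → θ ((g n j)⁻¹ * g m k) = s j + s k

/-- A real-valued function on an additive commutative semigroup is positive definite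
in the semigroup sense. -/
def IsPosDefSemigroup {S : Type*} [AddCommSemigroup S] (φ : S → ℝ) : Prop :=
  ∀ (n : ℕ) (s : Fin n → S) (c : Fin n → ℂ),
    0 ≤ ∑ j, ∑ k, c j * (starRingEnd ℂ) (c k) * (φ (s j + s k) : ℂ)

/-- Let `θ : G → S` be surjective and a morphism on an arbitrarily large subset of `G`,
and let `φ = φ̇ ∘ θ` be positive definite on `G`. Then `φ̇` is positive definite on the
semigroup `S` and bounded, with `φ̇(s) ≤ φ(e)` for all `s ∈ S`. -/
lemma pd_one {G : Type*} [Group G] {φ : G → ℝ} (hφ : IsPositiveDefinite φ) : 0 ≤ φ 1 := by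
  have := hφ 1 ![1] ![1]
  simp [Fin.sum_univ_one] at this
  exact_mod_cast this

lemma pd_symm {G : Type*} [Group G] {φ : G → ℝ} (hφ : IsPositiveDefinite φ) (g : G) :
    φ g⁻¹ = φ g := by
  have := hφ 2 ![1, g] ![1, Complex.I]
  rw [Fin.sum_univ_two] at this
  rw [Fin.sum_univ_two, Fin.sum_univ_two] at this
  simp [Complex.le_def, Complex.ext_iff] at this
  linarith [this.2]

lemma pd_abs_le {G : Type*} [Group G] {φ : G → ℝ} (hφ : IsPositiveDefinite φ) (g : G) :
    |φ g| ≤ φ 1 := by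
  have h1 := hφ 2 ![1, g] ![1, 1]
  have h2 := hφ 2 ![1, g] ![1, -1]
  rw [Fin.sum_univ_two] at h1 h2
  rw [Fin.sum_univ_two, Fin.sum_univ_two] at h1 h2
  simp [Complex.le_def, Complex.ext_iff] at h1 h2
  have hs := pd_symm hφ g
  rw [abs_le]
  constructor <;> linarith

lemma pd_fintype {G : Type*} [Group G] {φ : G → ℝ} (hφ : IsPositiveDefinite φ)
    {ι : Type*} [Fintype ι] (x : ι → G) (c : ι → ℂ) :
    0 ≤ ∑ j, ∑ k, c j * (starRingEnd ℂ) (c k) * (φ ((x j)⁻¹ * x k) : ℂ) := by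
  classical
  let e := Fintype.equivFin ι
  have := hφ (Fintype.card ι) (x ∘ e.symm) (c ∘ e.symm)
  rwa [show (∑ j, ∑ k, (c ∘ e.symm) j * (starRingEnd ℂ) ((c ∘ e.symm) k) *
      (φ (((x ∘ e.symm) j)⁻¹ * (x ∘ e.symm) k) : ℂ))
      = ∑ j, ∑ k, c j * (starRingEnd ℂ) (c k) * (φ ((x j)⁻¹ * x k) : ℂ) from by
    rw [← e.symm.sum_comp (fun j => ∑ k, c j * (starRingEnd ℂ) (c k) * (φ ((x j)⁻¹ * x k) : ℂ))]
    refine Finset.sum_congr rfl fun j _ => ?_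
    exact e.symm.sum_comp fun k => c (e.symm j) * (starRingEnd ℂ) (c k) *
      (φ ((x (e.symm j))⁻¹ * x k) : ℂ)] at this

theorem posDef_radial_descends_to_semigroup
    {G S : Type*} [Group G] [AddCommSemigroup S]
    (θ : G → S) (hsurj : Function.Surjective θ)
    (hmor : IsMorphismOnArbLargeSubset θ)
    (φ : G → ℝ) (hφ : IsPositiveDefinite φ)
    (φdot : S → ℝ) (hrad : ∀ g : G, φ g = φdot (θ g)) :
    IsPosDefSemigroup φdot ∧ ∀ s : S, φdot s ≤ φ 1 := by
  have h1 : 0 ≤ φ 1 := pd_one hφ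
  constructor
  · intro n s c
    set T : ℂ := ∑ j, ∑ k, c j * (starRingEnd ℂ) (c k) * (φdot (s j + s k) : ℂ) with hT
    set C : ℝ := (∑ j, ‖c j‖) ^ 2 * φ 1 with hCdef

    clear_value T C
    have hC0 : 0 ≤ C := by rw [hCdef]; exact mul_nonneg (sq_nonneg _) h1
    have key : ∀ N : ℕ, ∃ D : ℂ, ‖D‖ ≤ N * C ∧ 0 ≤ (N * (N - 1) : ℕ) • T + D := by
      intro N
      obtain ⟨g, hg⟩ := hmor N n s
      set SS : Fin N → Fin N → ℂ := fun m m' =>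
        ∑ j, ∑ k, c j * (starRingEnd ℂ) (c k) * (φ ((g m j)⁻¹ * g m' k) : ℂ) with hSS
      have hSSbound : ∀ m m' : Fin N, ‖SS m m'‖ ≤ C := by
        intro m m'
        calc ‖SS m m'‖
            ≤ ∑ j, ‖∑ k, c j * (starRingEnd ℂ) (c k) *
                (φ ((g m j)⁻¹ * g m' k) : ℂ)‖ := norm_sum_le _ _
          _ ≤ ∑ j, ∑ k, ‖c j * (starRingEnd ℂ) (c k) *
                (φ ((g m j)⁻¹ * g m' k) : ℂ)‖ :=
              Finset.sum_le_sum fun j _ => norm_sum_le _ _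
          _ ≤ ∑ j, ∑ k, ‖c j‖ * ‖c k‖ * φ 1 := by
              refine Finset.sum_le_sum fun j _ => Finset.sum_le_sum fun k _ => ?_
              rw [norm_mul, norm_mul, Complex.norm_conj, Complex.norm_real, Real.norm_eq_abs]
              exact mul_le_mul_of_nonneg_left (pd_abs_le hφ _)
                (mul_nonneg (norm_nonneg _) (norm_nonneg _))
          _ = C := by
              rw [hCdef, sq, Finset.sum_mul_sum, Finset.sum_mul]
              exact Finset.sum_congr rfl fun j _ => by rw [Finset.sum_mul]
      have hoff : ∀ m m' : Fin N, m ≠ m' → SS m m' = T := by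
        intro m m' hne
        rw [hT]
        refine Finset.sum_congr rfl fun j _ => Finset.sum_congr rfl fun k _ => ?_
        rw [hrad ((g m j)⁻¹ * g m' k), hg m m' j k hne]
      refine ⟨∑ m, SS m m, ?_, ?_⟩
      · calc ‖∑ m, SS m m‖ ≤ ∑ m : Fin N, ‖SS m m‖ :=
              norm_sum_le _ _
          _ ≤ ∑ _m : Fin N, C := Finset.sum_le_sum fun m _ => hSSbound m m
          _ = N * C := by rw [Finset.sum_const, Finset.card_univ, Fintype.card_fin,
              nsmul_eq_mul]
      · have hB := pd_fintype hφ (fun p : Fin N × Fin n => g p.1 p.2) (fun p => c p.2)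
        simp only [Fintype.sum_prod_type] at hB
        have hre : (∑ m : Fin N, ∑ j : Fin n, ∑ m' : Fin N, ∑ k : Fin n,
            c j * (starRingEnd ℂ) (c k) * (φ ((g m j)⁻¹ * g m' k) : ℂ))
            = (N * (N - 1) : ℕ) • T + ∑ m, SS m m := by
          have hc : ∀ m : Fin N, (∑ j : Fin n, ∑ m' : Fin N, ∑ k : Fin n,
              c j * (starRingEnd ℂ) (c k) * (φ ((g m j)⁻¹ * g m' k) : ℂ))
              = ∑ m' : Fin N, SS m m' := fun m => Finset.sum_comm
          rw [Finset.sum_congr rfl fun m _ => hc m]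
          have hrow : ∀ m : Fin N, (∑ m' : Fin N, SS m m') = SS m m + (N - 1) • T := by
            intro m
            rw [← Finset.add_sum_erase univ (SS m) (mem_univ m)]
            congr 1
            rw [Finset.sum_congr rfl fun m' hm' =>
              hoff m m' (Ne.symm (Finset.ne_of_mem_erase hm')),
              Finset.sum_const, Finset.card_erase_of_mem (mem_univ m),
              Finset.card_univ, Fintype.card_fin]
          rw [Finset.sum_congr rfl fun m _ => hrow m, Finset.sum_add_distrib,
            Finset.sum_const, Finset.card_univ, Fintype.card_fin, ← mul_smul]
          ring
        rwa [hre] at hB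
    have bound : ∀ ε : ℝ, 0 < ε → |T.im| ≤ ε ∧ -ε ≤ T.re := by
      intro ε hε
      obtain ⟨N, hN⟩ := exists_nat_gt (C / ε + 1)
      have hCε0 : 0 ≤ C / ε := div_nonneg hC0 hε.le
      have hN1 : (1 : ℝ) < N := by linarith
      have hN1' : 1 ≤ N := by exact_mod_cast hN1.le
      obtain ⟨D, hD, hpos⟩ := key N
      rw [Complex.le_def] at hpos
      have hKcast : ((N * (N - 1) : ℕ) : ℝ) = (N : ℝ) * ((N : ℝ) - 1) := by
        push_cast [Nat.cast_sub hN1']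
        ring
      have hsre : ((N * (N - 1) : ℕ) • T + D).re
          = (N : ℝ) * ((N : ℝ) - 1) * T.re + D.re := by
        rw [Complex.add_re, nsmul_eq_mul, Complex.mul_re, Complex.natCast_re,
          Complex.natCast_im, hKcast]
        ring
      have hsim : ((N * (N - 1) : ℕ) • T + D).im
          = (N : ℝ) * ((N : ℝ) - 1) * T.im + D.im := by
        rw [Complex.add_im, nsmul_eq_mul, Complex.mul_im, Complex.natCast_re,
          Complex.natCast_im, hKcast]
        ring
      have hre0 : 0 ≤ (N : ℝ) * ((N : ℝ) - 1) * T.re + D.re := by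
        have := hpos.1; rw [hsre] at this; simpa using this
      have him0 : (N : ℝ) * ((N : ℝ) - 1) * T.im + D.im = 0 := by
        have := hpos.2; rw [hsim] at this; simpa using this.symm
      have hDre := abs_le.mp (le_trans (Complex.abs_re_le_norm D) hD)
      have hDim := abs_le.mp (le_trans (Complex.abs_im_le_norm D) hD)
      have hC' : C < ((N : ℝ) - 1) * ε := (div_lt_iff₀ hε).mp (by linarith)
      have hNC : (N : ℝ) * C ≤ (N : ℝ) * (((N : ℝ) - 1) * ε) :=
        mul_le_mul_of_nonneg_left hC'.le (by positivity)
      have hK : (0 : ℝ) < (N : ℝ) * ((N : ℝ) - 1) := by nlinarith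
      refine ⟨abs_le.mpr ⟨?_, ?_⟩, ?_⟩
      · have e2 : (N : ℝ) * ((N : ℝ) - 1) * (-ε) ≤ (N : ℝ) * ((N : ℝ) - 1) * T.im := by
          linarith only [him0, hDim.2, hNC]
        exact le_of_mul_le_mul_left e2 hK
      · have e1 : (N : ℝ) * ((N : ℝ) - 1) * T.im ≤ (N : ℝ) * ((N : ℝ) - 1) * ε := by
          linarith only [him0, hDim.1, hNC]
        exact le_of_mul_le_mul_left e1 hK
      · have e3 : (N : ℝ) * ((N : ℝ) - 1) * (-ε) ≤ (N : ℝ) * ((N : ℝ) - 1) * T.re := by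
          linarith only [hre0, hDre.2, hNC]
        exact le_of_mul_le_mul_left e3 hK
    have him : T.im = 0 := by
      have h : |T.im| ≤ 0 := le_of_forall_pos_le_add
        (fun ε hε => by rw [zero_add]; exact (bound ε hε).1)
      exact abs_eq_zero.mp (le_antisymm h (abs_nonneg _))
    have hre : 0 ≤ T.re := by
      have h : -T.re ≤ 0 := le_of_forall_pos_le_add
        (fun ε hε => by rw [zero_add]; linarith [(bound ε hε).2])
      linarith
    rw [Complex.le_def]
    exact ⟨by simpa using hre, by simpa using him.symm⟩
  · intro s
    obtain ⟨g, rfl⟩ := hsurj s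
    rw [← hrad g]
    exact le_trans (le_abs_self _) (pd_abs_le hφ g)
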